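/- Let n ≥ 3 and let w : ZMod n → Bool × Bool encode a dominating set of the prism graph G_n. If w_i = C and w_{i+1} = C for some i ∈ ZMod n, then w_{i−1} = D and w_{i+2} = D. -/

import Mathlib

/-- The prism graph `C_n □ P_2` on vertex set `ZMod n × Fin 2`:
`(i,r)` is adjacent to `(i±1,r)` and to `(i,1-r)`. -/
def prismGraph (n : ℕ) : SimpleGraph (ZMod n × Fin 2) where
  Adj u v := u ≠ v ∧
    ((u.1 = v.1 ∧ u.2 ≠ v.2) ∨
     (u.2 = v.2 ∧ (u.1 = v.1 + 1 ∨ v.1 = u.1 + 1)))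
  symm := by
    refine ⟨?_⟩
    rintro ⟨i, r⟩ ⟨j, s⟩ ⟨hne, h⟩
    refine ⟨Ne.symm hne, ?_⟩
    rcases h with ⟨h1, h2⟩ | ⟨h1, h2⟩
    · exact Or.inl ⟨h1.symm, h2.symm⟩
    · exact Or.inr ⟨h1.symm, h2.symm⟩
  loopless := by
    refine ⟨?_⟩
    rintro ⟨i, r⟩ ⟨hne, -⟩
    exact hne rfl

/-- `S` is a dominating set of the prism graph: every vertex is in `S`
or adjacent to a vertex of `S`. -/
def IsDominatingSet (n : ℕ) (S : Set (ZMod n × Fin 2)) : Prop :=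
  ∀ v, v ∈ S ∨ ∃ u ∈ S, (prismGraph n).Adj u v

/-- The domination number `γ(G_n)`: minimum cardinality of a dominating set. -/
noncomputable def domNum (n : ℕ) : ℕ :=
  sInf {k | ∃ S : Finset (ZMod n × Fin 2), S.card = k ∧ IsDominatingSet n ↑S}

/-- The dominion `ζ(G_n)`: the number of dominating sets of cardinality `γ(G_n)`. -/
noncomputable def dominion (n : ℕ) : ℕ :=
  {S : Finset (ZMod n × Fin 2) | S.card = domNum n ∧ IsDominatingSet n ↑S}.ncard

/-- The set of vertices encoded by a word `w : ZMod n → Bool × Bool`;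
the first bit of `w i` records membership of the top vertex `(i,0)`,
the second bit that of the bottom vertex `(i,1)`. -/
def wordSet (n : ℕ) (w : ZMod n → Bool × Bool) : Set (ZMod n × Fin 2) :=
  {v | (if v.2 = 0 then (w v.1).1 else (w v.1).2) = true}

/-- A minimum dominating word: it encodes a dominating set of cardinality `γ(G_n)`. -/
def IsMinDomWord (n : ℕ) (w : ZMod n → Bool × Bool) : Prop :=
  IsDominatingSet n (wordSet n w) ∧ (wordSet n w).ncard = domNum n

def letC : Bool × Bool := (false, false)
def letA : Bool × Bool := (true, false)
def letB : Bool × Bool := (false, true)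
def letD : Bool × Bool := (true, true)

lemma force_left (n : ℕ) (w : ZMod n → Bool × Bool)
    (hdom : IsDominatingSet n (wordSet n w)) (j : ZMod n)
    (hj : w j = letC) (hR : w (j + 1) = letC) : w (j - 1) = letD := by
  have key : ∀ r : Fin 2, (if r = 0 then (w (j-1)).1 else (w (j-1)).2) = true := by
    intro r
    rcases hdom (j, r) with hm | ⟨⟨a, s⟩, hm, hne, hadj⟩
    · simp [wordSet, hj, letC] at hm
    · simp only at hadj
      rcases hadj with ⟨ha, hs⟩ | ⟨hs, ha | ha⟩
      · simp [wordSet, ha, hj, letC] at hm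
      · simp [wordSet, ha, hR, letC] at hm
      · have : a = j - 1 := by rw [ha]; ring
        subst hs
        simpa [wordSet, this] using hm
  have k0 := key 0
  have k1 := key 1
  simp at k0 k1
  exact Prod.ext k0 k1

lemma force_right (n : ℕ) (w : ZMod n → Bool × Bool)
    (hdom : IsDominatingSet n (wordSet n w)) (j : ZMod n)
    (hj : w j = letC) (hL : w (j - 1) = letC) : w (j + 1) = letD := by
  have key : ∀ r : Fin 2, (if r = 0 then (w (j+1)).1 else (w (j+1)).2) = true := by
    intro r
    rcases hdom (j, r) with hm | ⟨⟨a, s⟩, hm, hne, hadj⟩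
    · simp [wordSet, hj, letC] at hm
    · simp only at hadj
      rcases hadj with ⟨ha, hs⟩ | ⟨hs, ha | ha⟩
      · simp [wordSet, ha, hj, letC] at hm
      · subst hs
        simpa [wordSet, ha] using hm
      · have : a = j - 1 := by rw [ha]; ring
        simp [wordSet, this, hL, letC] at hm
  have k0 := key 0
  have k1 := key 1
  simp at k0 k1
  exact Prod.ext k0 k1

theorem CC_forces_D (n : ℕ) (hn : 3 ≤ n) (w : ZMod n → Bool × Bool)
    (hdom : IsDominatingSet n (wordSet n w)) (i : ZMod n)
    (h1 : w i = letC) (h2 : w (i + 1) = letC) :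
    w (i - 1) = letD ∧ w (i + 2) = letD := by
  refine ⟨force_left n w hdom i h1 h2, ?_⟩
  have hL : w (i + 1 - 1) = letC := by simpa using h1
  have := force_right n w hdom (i + 1) h2 hL
  rw [show i + 1 + 1 = i + 2 by ring] at this
  exact this
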